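/- Let θ ∈ ℝ with cos(θ/2) ≠ 0, and suppose ω = 2(1 − cos θ). If there exist natural numbers m, n with 1 ≤ m < n and τ_m = τ_n, then θ is a rational multiple of π, i.e. there exists a rational number c with θ = c·π. -/

import Mathlib

open Matrix

/-- The matrix `X = [[1,1],[0,1]]`. -/
noncomputable def Xmat : Matrix (Fin 2) (Fin 2) ℂ := !![1, 1; 0, 1]

/-- The matrix `Y = [[1,0],[ω,1]]`. -/
noncomputable def Ymat (ω : ℂ) : Matrix (Fin 2) (Fin 2) ℂ := !![1, 0; ω, 1]

/-- `τ n` is the trace of `X ⬝ (Y ⬝ X⁻¹)^n`. -/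
noncomputable def τ (ω : ℂ) (n : ℕ) : ℂ := (Xmat * (Ymat ω * Xmat⁻¹) ^ n).trace

lemma Xinv : Xmat⁻¹ = !![1, -1; 0, 1] := by
  apply inv_eq_right_inv
  ext i j
  fin_cases i <;> fin_cases j <;>
    simp [Xmat, Matrix.mul_apply, Fin.sum_univ_two, Matrix.one_apply]
lemma Mdef (ω : ℂ) : Ymat ω * Xmat⁻¹ = !![1, -1; ω, 1 - ω] := by
  rw [Xinv]
  ext i j
  fin_cases i <;> fin_cases j <;>
    simp [Ymat, Matrix.mul_apply, Fin.sum_univ_two] <;> ring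
lemma tau1 (ω : ℂ) : τ ω 1 = 2 := by
  rw [τ, pow_one, Mdef, Xmat, Matrix.trace_fin_two]
  simp [Matrix.mul_apply, Fin.sum_univ_two]
  ring
lemma Msq (ω : ℂ) : (Ymat ω * Xmat⁻¹) ^ 2 = (2 - ω) • (Ymat ω * Xmat⁻¹) - 1 := by
  rw [Mdef, pow_two]
  ext i j
  fin_cases i <;> fin_cases j <;>
    simp [Matrix.mul_apply, Fin.sum_univ_two, Matrix.one_apply] <;> ring
lemma tau_rec (ω : ℂ) (n : ℕ) : τ ω (n + 2) = (2 - ω) * τ ω (n + 1) - τ ω n := by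
  simp only [τ]
  have h2 : (Ymat ω * Xmat⁻¹) ^ (n + 2) = (Ymat ω * Xmat⁻¹) ^ n * ((2 - ω) • (Ymat ω * Xmat⁻¹) - 1) := by
    rw [← Msq, ← pow_add]
  rw [h2, pow_succ, Matrix.mul_sub, Matrix.mul_one, Matrix.mul_sub, Matrix.trace_sub]
  rw [Matrix.mul_smul, Matrix.mul_smul, Matrix.trace_smul, smul_eq_mul]

lemma cheb_step (θ : ℝ) (n : ℕ) :
    Real.cos ((2*((n:ℝ)+2)-1)*θ/2)
      = 2 * Real.cos θ * Real.cos ((2*((n:ℝ)+1)-1)*θ/2) - Real.cos ((2*(n:ℝ)-1)*θ/2) := by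
  have h1 : (2*((n:ℝ)+2)-1)*θ/2 = (2*((n:ℝ)+1)-1)*θ/2 + θ := by ring
  have h2 : (2*(n:ℝ)-1)*θ/2 = (2*((n:ℝ)+1)-1)*θ/2 - θ := by ring
  rw [h1, h2, Real.cos_add, Real.cos_sub]
  ring

lemma tau0 (ω : ℂ) : τ ω 0 = 2 := by
  simp only [τ, pow_zero, Matrix.mul_one, Xmat, Matrix.trace_fin_two]
  norm_num

lemma tau_closed (θ : ℝ) (hcos : Real.cos (θ / 2) ≠ 0) (ω : ℂ)
    (hω : ω = 2 * (1 - (Real.cos θ : ℂ))) (n : ℕ) :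
    τ ω n = ((2 * Real.cos ((2*(n:ℝ)-1)*θ/2) / Real.cos (θ/2) : ℝ) : ℂ) := by
  have h2ω : 2 - ω = ((2 * Real.cos θ : ℝ) : ℂ) := by rw [hω]; push_cast; ring
  have base0 : τ ω 0 = ((2 * Real.cos ((2*(0:ℝ)-1)*θ/2) / Real.cos (θ/2) : ℝ) : ℂ) := by
    rw [tau0]
    have h : (2*(0:ℝ)-1)*θ/2 = -(θ/2) := by ring
    rw [h, Real.cos_neg, mul_div_assoc, div_self hcos]
    norm_num
  have base1 : τ ω 1 = ((2 * Real.cos ((2*(1:ℝ)-1)*θ/2) / Real.cos (θ/2) : ℝ) : ℂ) := by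
    rw [tau1]
    have h : (2*(1:ℝ)-1)*θ/2 = θ/2 := by ring
    rw [h, mul_div_assoc, div_self hcos]
    norm_num
  have key : ∀ k : ℕ, τ ω k = ((2 * Real.cos ((2*(k:ℝ)-1)*θ/2) / Real.cos (θ/2) : ℝ) : ℂ) ∧
      τ ω (k+1) = ((2 * Real.cos ((2*((k:ℝ)+1)-1)*θ/2) / Real.cos (θ/2) : ℝ) : ℂ) := by
    intro k
    induction k with
    | zero =>
      constructor
      · simpa only [Nat.cast_zero] using base0
      · simpa only [Nat.cast_zero, zero_add] using base1
    | succ k ih =>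
      constructor
      · simpa only [Nat.cast_add, Nat.cast_one] using ih.2
      · rw [tau_rec, ih.2, ih.1, h2ω, ← Complex.ofReal_mul, ← Complex.ofReal_sub,
          Complex.ofReal_inj]
        have harg : (2*(((k:ℝ)+1)+1)-1)*θ/2 = (2*((k:ℝ)+2)-1)*θ/2 := by ring
        push_cast
        rw [harg, cheb_step θ k]
        ring
  exact (key n).1

theorem tau_repeat_implies_rational (ω : ℂ) (θ : ℝ) (hcos : Real.cos (θ / 2) ≠ 0)
    (hω : ω = 2 * (1 - (Real.cos θ : ℂ)))
    (h : ∃ m n : ℕ, 1 ≤ m ∧ m < n ∧ τ ω m = τ ω n) :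
    ∃ c : ℚ, θ = (c : ℝ) * Real.pi := by
  obtain ⟨m, n, hm, hmn, heq⟩ := h
  rw [tau_closed θ hcos ω hω m, tau_closed θ hcos ω hω n, Complex.ofReal_inj] at heq
  have hcc : Real.cos ((2*(m:ℝ)-1)*θ/2) = Real.cos ((2*(n:ℝ)-1)*θ/2) := by
    field_simp at heq
    rw [mul_comm θ] at heq
    exact heq
  rw [Real.cos_eq_cos_iff] at hcc
  obtain ⟨k, hk | hk⟩ := hcc
  · -- (2n-1)θ/2 = 2kπ + (2m-1)θ/2
    refine ⟨(2*k)/((n:ℚ)-m), ?_⟩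
    have hnm : (n:ℝ) - m ≠ 0 := by
      have : (m:ℝ) < n := by exact_mod_cast hmn
      linarith
    have hcast : (((2*k)/((n:ℚ)-m) : ℚ) : ℝ) = (2*(k:ℝ))/((n:ℝ)-m) := by push_cast; ring
    rw [hcast]
    field_simp
    linarith [hk]
  · -- (2n-1)θ/2 = 2kπ - (2m-1)θ/2
    refine ⟨(2*k)/((n:ℚ)+m-1), ?_⟩
    have hnm : (n:ℝ) + m - 1 ≠ 0 := by
      have h1 : (1:ℝ) ≤ m := by exact_mod_cast hm
      have h2 : (m:ℝ) < n := by exact_mod_cast hmn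
      linarith
    have hcast : (((2*k)/((n:ℚ)+m-1) : ℚ) : ℝ) = (2*(k:ℝ))/((n:ℝ)+m-1) := by push_cast; ring
    rw [hcast]
    field_simp
    linarith [hk]
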